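/- Let $K_n$ be the complete directed acyclic graph on $[n]$ with edges $(i,j)$ for all $i < j$. A subgraph $H \subseteq K_n$ satisfies that $\tilde Q_H$ is a face of $\tilde Q_{K_n}$ if and only if there exist $0 = n_0 < n_1 < \dots < n_{\ell+1} = n$ such that $E(H) = \{(i,j) : n_k < i < j \leq n_{k+1} \text{ for some } k\}$, i.e., $H$ is a disjoint union of complete graphs on consecutive intervals of $[n]$. -/

import Mathlib

/-- The vector `e_i - e_j` associated to the directed edge `e = (i, j)`. -/
def vecOf (n : ℕ) (e : Fin n × Fin n) : Fin n → ℝ :=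
  fun k => (if k = e.1 then 1 else 0) - (if k = e.2 then 1 else 0)

/-- The root polytope `tilde Q_G = conv{0, e_i - e_j : (i,j) ∈ E(G)}`. -/
def tQ (n : ℕ) (E : Set (Fin n × Fin n)) : Set (Fin n → ℝ) :=
  convexHull ℝ ({0} ∪ vecOf n '' E)

/-- `F` is a face of `P`: cut out by a supporting hyperplane. -/
def IsFace (n : ℕ) (P F : Set (Fin n → ℝ)) : Prop :=
  ∃ (c : Fin n → ℝ) (a : ℝ), (∀ x ∈ P, a ≤ ∑ i, c i * x i) ∧
    F = {x ∈ P | ∑ i, c i * x i = a}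

/-- The edge set of the complete directed acyclic graph `K_n` on `[n]`. -/
def KnE (n : ℕ) : Set (Fin n × Fin n) := {e | e.1 < e.2}

noncomputable def lf {n : ℕ} (c : Fin n → ℝ) : (Fin n → ℝ) →ₗ[ℝ] ℝ :=
  ∑ i, c i • LinearMap.proj i

lemma lf_apply {n : ℕ} (c x : Fin n → ℝ) : lf c x = ∑ i, c i * x i := by
  simp [lf]

lemma lf_vecOf {n : ℕ} (c : Fin n → ℝ) (e : Fin n × Fin n) :
    lf c (vecOf n e) = c e.1 - c e.2 := by
  simp [lf_apply, vecOf, mul_sub, Finset.sum_sub_distrib, mul_ite, mul_one, mul_zero,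
    Finset.sum_ite_eq']

lemma hull_le {n : ℕ} (c : Fin n → ℝ) (s : Set (Fin n → ℝ)) (r : ℝ)
    (h : ∀ y ∈ s, lf c y ≤ r) : ∀ x ∈ convexHull ℝ s, lf c x ≤ r := by
  intro x hx
  exact convexHull_min h (convex_halfSpace_le (LinearMap.isLinear _) r) hx

lemma hull_ge {n : ℕ} (c : Fin n → ℝ) (s : Set (Fin n → ℝ)) (r : ℝ)
    (h : ∀ y ∈ s, r ≤ lf c y) : ∀ x ∈ convexHull ℝ s, r ≤ lf c x := by
  intro x hx
  exact convexHull_min h (convex_halfSpace_ge (LinearMap.isLinear _) r) hx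

lemma mem_of_vec_mem_hull {n : ℕ} (EH : Set (Fin n × Fin n)) (hH : EH ⊆ KnE n)
    (e : Fin n × Fin n) (he : e ∈ KnE n) (hx : vecOf n e ∈ tQ n EH) : e ∈ EH := by
  by_contra hne
  have hb : ∀ y ∈ ({0} ∪ vecOf n '' EH : Set (Fin n → ℝ)), lf (vecOf n e) y ≤ 1 := by
    rintro y (rfl | ⟨e', he', rfl⟩)
    · simp
    · rw [lf_vecOf]
      have hne' : e' ≠ e := fun h => hne (h ▸ he')
      have key : e'.1 ≠ e.1 ∨ e'.2 ≠ e.2 := by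
        by_contra hcon; push_neg at hcon
        exact hne' (Prod.ext_iff.mpr ⟨hcon.1, hcon.2⟩)
      simp only [vecOf]
      rcases key with h | h <;> split_ifs <;> first | exact absurd ‹_› h | norm_num
  have h2 := hull_le (vecOf n e) _ 1 hb (vecOf n e) hx
  rw [lf_vecOf] at h2
  have hel : e.1 ≠ e.2 := ne_of_lt he
  simp only [vecOf, if_pos rfl, if_neg hel, if_neg (Ne.symm hel)] at h2
  norm_num at h2

theorem stmt17 (n : ℕ) (EH : Set (Fin n × Fin n)) (hH : EH ⊆ KnE n) :
    IsFace n (tQ n (KnE n)) (tQ n EH) ↔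
      ∃ b : Fin n → ℕ, Monotone b ∧
        EH = {e : Fin n × Fin n | e.1 < e.2 ∧ b e.1 = b e.2} := by
  constructor
  · rintro ⟨c, a, hsupp, hface⟩
    have h0F : (0 : Fin n → ℝ) ∈ tQ n EH := subset_convexHull _ _ (Or.inl rfl)
    have ha : a = 0 := by
      rw [hface] at h0F
      have := h0F.2
      simpa using this.symm
    have hvmem : ∀ e ∈ KnE n, vecOf n e ∈ tQ n (KnE n) :=
      fun e he => subset_convexHull _ _ (Or.inr ⟨e, he, rfl⟩)
    have hge : ∀ e ∈ KnE n, 0 ≤ c e.1 - c e.2 := by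
      intro e he
      have h1 := hsupp _ (hvmem e he)
      rw [← lf_apply, lf_vecOf] at h1
      linarith [ha ▸ h1]
    have hanti : Antitone c := by
      intro i j hij
      rcases eq_or_lt_of_le hij with rfl | h
      · exact le_refl _
      · linarith [hge (i, j) h]
    have hFc : ∀ e ∈ EH, c e.1 = c e.2 := by
      intro e he
      have hv : vecOf n e ∈ tQ n EH := subset_convexHull _ _ (Or.inr ⟨e, he, rfl⟩)
      rw [hface] at hv
      have h1 := hv.2
      rw [← lf_apply, lf_vecOf, ha] at h1
      linarith
    refine ⟨fun k => (Finset.univ.filter fun m => c k < c m).card, ?_, ?_⟩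
    · intro i j hij
      apply Finset.card_le_card
      intro m hm
      simp only [Finset.mem_filter, Finset.mem_univ, true_and] at hm ⊢
      exact lt_of_le_of_lt (hanti hij) hm
    · ext e
      simp only [Set.mem_setOf_eq]
      constructor
      · intro he
        refine ⟨hH he, ?_⟩
        have := hFc e he
        simp only [this]
      · rintro ⟨hlt, hb⟩
        have hc : c e.1 = c e.2 := by
          by_contra hnec
          have hlt' : c e.2 < c e.1 := lt_of_le_of_ne (hanti hlt.le) (Ne.symm hnec)
          have hss : (Finset.univ.filter fun m => c e.1 < c m) ⊂
              (Finset.univ.filter fun m => c e.2 < c m) := by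
            refine Finset.ssubset_iff_of_subset ?_ |>.mpr ⟨e.1, ?_, ?_⟩
            · intro m hm
              simp only [Finset.mem_filter, Finset.mem_univ, true_and] at hm ⊢
              exact lt_trans hlt' hm
            · simp only [Finset.mem_filter, Finset.mem_univ, true_and]
              exact hlt'
            · simp only [Finset.mem_filter, Finset.mem_univ, true_and, not_lt]
              exact le_refl _
          exact absurd hb (Nat.ne_of_lt (Finset.card_lt_card hss))
        have hv : vecOf n e ∈ tQ n EH := by
          rw [hface]
          refine ⟨hvmem e hlt, ?_⟩
          rw [← lf_apply, lf_vecOf, hc, ha]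
          ring
        exact mem_of_vec_mem_hull EH hH e hlt hv
  · rintro ⟨b, hb, rfl⟩
    set EH' : Set (Fin n × Fin n) := {e | e.1 < e.2 ∧ b e.1 = b e.2} with hEH'
    set c : Fin n → ℝ := fun k => -(b k : ℝ) with hc
    have hgen : ∀ y ∈ ({0} ∪ vecOf n '' KnE n : Set (Fin n → ℝ)), 0 ≤ lf c y := by
      rintro y (rfl | ⟨e, he, rfl⟩)
      · simp
      · rw [lf_vecOf]
        have : b e.1 ≤ b e.2 := hb (le_of_lt he)
        have h2 : (b e.1 : ℝ) ≤ (b e.2 : ℝ) := by exact_mod_cast this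
        simp only [hc]
        linarith
    refine ⟨c, 0, ?_, ?_⟩
    · intro x hx
      rw [← lf_apply]
      exact hull_ge c _ 0 hgen x hx
    · ext x
      simp only [Set.mem_setOf_eq, ← lf_apply]
      constructor
      · intro hx
        have hsub : tQ n EH' ⊆ tQ n (KnE n) := by
          apply convexHull_mono
          apply Set.union_subset_union_right
          exact Set.image_mono (fun e he => he.1)
        refine ⟨hsub hx, ?_⟩
        have hle : lf c x ≤ 0 := by
          apply hull_le c _ 0 _ x hx
          rintro y (rfl | ⟨e, he, rfl⟩)
          · simp
          · rw [lf_vecOf]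
            have : b e.1 = b e.2 := he.2
            have h2 : (b e.1 : ℝ) = (b e.2 : ℝ) := by exact_mod_cast this
            simp only [hc]
            linarith
        have hge2 : 0 ≤ lf c x := hull_ge c _ 0 hgen x (hsub hx)
        linarith
      · rintro ⟨hxP, hx0⟩
        rw [tQ, convexHull_eq] at hxP
        obtain ⟨ι, t, w, z, hw0, hw1, hz, hcent⟩ := hxP
        have hxeq : x = ∑ i ∈ t, w i • z i := by
          rw [← hcent, Finset.centerMass_eq_of_sum_1 _ _ hw1]
        have hlfz : ∀ i ∈ t, 0 ≤ lf c (z i) := fun i hi => hgen _ (hz i hi)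
        have hsum0 : ∑ i ∈ t, w i * lf c (z i) = 0 := by
          have : lf c x = ∑ i ∈ t, w i * lf c (z i) := by
            rw [hxeq, map_sum]
            simp [smul_eq_mul]
          rw [← this, hx0]
        have hzero : ∀ i ∈ t, w i * lf c (z i) = 0 :=
          (Finset.sum_eq_zero_iff_of_nonneg
            (fun i hi => mul_nonneg (hw0 i hi) (hlfz i hi))).mp hsum0
        set z' : ι → (Fin n → ℝ) := fun i => if w i = 0 then 0 else z i with hz'
        have hxeq' : x = ∑ i ∈ t, w i • z' i := by
          rw [hxeq]
          apply Finset.sum_congr rfl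
          intro i hi
          simp only [hz']
          by_cases h : w i = 0
          · simp [h]
          · simp [h]
        have hz'mem : ∀ i ∈ t, z' i ∈ tQ n EH' := by
          intro i hi
          simp only [hz']
          by_cases h : w i = 0
          · simp only [h, if_pos]
            exact subset_convexHull _ _ (Or.inl rfl)
          · simp only [h, if_neg, ite_false]
            apply subset_convexHull _ _
            rcases hz i hi with h0 | ⟨e, he, heq⟩
            · exact Or.inl h0
            · right
              refine ⟨e, ?_, heq⟩
              have hl0 : lf c (z i) = 0 := by
                rcases mul_eq_zero.mp (hzero i hi) with h' | h'
                · exact absurd h' h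
                · exact h'
              rw [← heq, lf_vecOf] at hl0
              simp only [hc] at hl0
              have hbe : (b e.1 : ℝ) = b e.2 := by linarith
              exact ⟨he, Nat.cast_injective hbe⟩
        rw [hxeq']
        exact (convex_convexHull ℝ _).sum_mem hw0 hw1 hz'mem
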